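/- If (a,b,c) is a solution of the *-Markov equation a·a* + b·b* + c·c* - abc = (3s₁s₂ - s₁³)/s₃, then for any integers i, j the triple (s₃^i·a, s₃^{-i-j}·b, s₃^j·c) is also a solution. -/

import Mathlib

open MvPolynomial

noncomputable section

/-- The polynomial ring `ℤ[s₁,s₂,s₃]`. -/
abbrev A3 := MvPolynomial (Fin 3) ℤ

def S1 : A3 := X 0
def S2 : A3 := X 1
def S3 : A3 := X 2

/-- The Laurent ring `ℤ[s₁,s₂,s₃^{±1}]`, polynomial in `s₁,s₂`, Laurent in `s₃`. -/
abbrev LP := Localization.Away S3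

def ι : A3 →+* LP := algebraMap A3 LP

def s₁ : LP := ι S1
def s₂ : LP := ι S2
def s₃ : LP := ι S3
/-- `s₃⁻¹`. -/
def s₃' : LP := IsLocalization.Away.invSelf S3

lemma s₃_mul_s₃' : s₃ * s₃' = 1 := IsLocalization.Away.mul_invSelf S3

/-- The `*`-involution `f ↦ f*`, determined by `s₁ ↦ s₂/s₃`, `s₂ ↦ s₁/s₃`, `s₃ ↦ 1/s₃`. -/
def starMap : LP →+* LP :=
  IsLocalization.Away.lift
    (g := eval₂Hom (Int.castRingHom LP) ![s₂ * s₃', s₁ * s₃', s₃']) S3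
    (by
      have h : (eval₂Hom (Int.castRingHom LP) ![s₂ * s₃', s₁ * s₃', s₃']) S3 = s₃' := by
        simp [S3]
      rw [h]
      exact IsUnit.of_mul_eq_one s₃ (by rw [mul_comm]; exact s₃_mul_s₃'))

/-- `s₃` as a unit of `ℤ[s₁,s₂,s₃^{±1}]`. -/
def u₃ : LPˣ :=
  ⟨s₃, s₃', s₃_mul_s₃', by rw [mul_comm]; exact s₃_mul_s₃'⟩
lemma starMap_s₃ : starMap s₃ = s₃' := by
  rw [s₃, ι, starMap, IsLocalization.Away.lift_eq]
  simp [S3]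

lemma starMap_u₃ : Units.map (starMap : LP →* LP) u₃ = u₃⁻¹ := by
  ext
  exact starMap_s₃

lemma starMap_u₃_zpow (k : ℤ) :
    starMap ((u₃ ^ k : LPˣ) : LP) = ((u₃ ^ (-k) : LPˣ) : LP) := by
  have : Units.map (starMap : LP →* LP) (u₃ ^ k) = u₃ ^ (-k) := by
    rw [map_zpow, starMap_u₃, zpow_neg, inv_zpow]
  exact congrArg Units.val this

lemma u₃_val_mul (m n : ℤ) :
    ((u₃ ^ m : LPˣ) : LP) * ((u₃ ^ n : LPˣ) : LP) = ((u₃ ^ (m + n) : LPˣ) : LP) := by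
  rw [← Units.val_mul, ← zpow_add]

/-- If `(a,b,c)` solves the `*`-Markov equation, then so does
`(s₃^i a, s₃^{-i-j} b, s₃^j c)` for any integers `i, j`. -/
theorem starMarkov_mu (a b c : LP)
    (h : a * starMap a + b * starMap b + c * starMap c - a * b * c
        = (3 * s₁ * s₂ - s₁ ^ 3) * s₃') (i j : ℤ) :
    ((u₃ ^ i : LPˣ) : LP) * a * starMap (((u₃ ^ i : LPˣ) : LP) * a)
        + ((u₃ ^ (-i - j) : LPˣ) : LP) * b * starMap (((u₃ ^ (-i - j) : LPˣ) : LP) * b)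
        + ((u₃ ^ j : LPˣ) : LP) * c * starMap (((u₃ ^ j : LPˣ) : LP) * c)
        - (((u₃ ^ i : LPˣ) : LP) * a) * (((u₃ ^ (-i - j) : LPˣ) : LP) * b)
            * (((u₃ ^ j : LPˣ) : LP) * c)
      = (3 * s₁ * s₂ - s₁ ^ 3) * s₃' := by
  rw [← h]
  simp only [map_mul, starMap_u₃_zpow]
  have e1 : ∀ (k : ℤ) (x : LP), ((u₃ ^ k : LPˣ) : LP) * x * (((u₃ ^ (-k) : LPˣ) : LP) * starMap x)
      = x * starMap x := by
    intro k x
    have : ((u₃ ^ k : LPˣ) : LP) * ((u₃ ^ (-k) : LPˣ) : LP) = 1 := by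
      rw [u₃_val_mul]; simp
    calc ((u₃ ^ k : LPˣ) : LP) * x * (((u₃ ^ (-k) : LPˣ) : LP) * starMap x)
        = ((u₃ ^ k : LPˣ) : LP) * ((u₃ ^ (-k) : LPˣ) : LP) * (x * starMap x) := by ring
      _ = x * starMap x := by rw [this, one_mul]
  rw [e1, e1, e1]
  congr 1
  have : ((u₃ ^ i : LPˣ) : LP) * ((u₃ ^ (-i - j) : LPˣ) : LP) * ((u₃ ^ j : LPˣ) : LP) = 1 := by
    rw [u₃_val_mul, u₃_val_mul, show i + (-i - j) + j = 0 by ring, zpow_zero, Units.val_one]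
  calc ((u₃ ^ i : LPˣ) : LP) * a * (((u₃ ^ (-i - j) : LPˣ) : LP) * b) * (((u₃ ^ j : LPˣ) : LP) * c)
      = ((u₃ ^ i : LPˣ) : LP) * ((u₃ ^ (-i - j) : LPˣ) : LP) * ((u₃ ^ j : LPˣ) : LP) * (a * b * c) := by ring
    _ = a * b * c := by rw [this, one_mul]
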